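/- Let a < b be coprime positive integers with b − a ≥ 4, let j be an integer with 0 ≤ j ≤ a+b and t_j = j/(a+b). Then γ_{a,b} restricted to the interval [t_j, t_j + 2/(b²−a²)] is injective. -/

import Mathlib

open Complex

theorem gamma_injective_on_interval (a b : ℕ) (ha : 0 < a) (hab : a < b)
    (hcop : Nat.gcd a b = 1) (hba : 4 ≤ b - a) (j : ℕ) (hj : j ≤ a + b) :
    Set.InjOn (fun t : ℝ =>
        Complex.exp (2 * Real.pi * Complex.I * (a : ℂ) * (t : ℂ)) +
          Complex.exp (2 * Real.pi * Complex.I * (b : ℂ) * (t : ℂ)))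
      (Set.Icc ((j : ℝ) / ((a : ℝ) + b))
        ((j : ℝ) / ((a : ℝ) + b) + 2 / ((b : ℝ) ^ 2 - (a : ℝ) ^ 2))) := by
  have ha1 : (1 : ℝ) ≤ a := by exact_mod_cast ha
  have hb4 : (a : ℝ) + 4 ≤ b := by
    have : a + 4 ≤ b := by omega
    exact_mod_cast this
  have hpi := Real.pi_pos
  set c : ℝ := Real.pi * ((b : ℝ) - a) with hc
  set d : ℝ := Real.pi * ((b : ℝ) + a) with hd
  have hsum : (6 : ℝ) ≤ (b : ℝ) + a := by linarith
  have hdiff : (4 : ℝ) ≤ (b : ℝ) - a := by linarith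
  have hcpos : 0 < c := by rw [hc]; nlinarith
  have hdpos : 0 < d := by rw [hd]; nlinarith
  have hsq : (b : ℝ) ^ 2 - (a : ℝ) ^ 2 = ((b : ℝ) - a) * ((b : ℝ) + a) := by ring
  have hsqpos : (0:ℝ) < (b : ℝ) ^ 2 - (a : ℝ) ^ 2 := by nlinarith
  -- Factorization γ(u) = exp(i d u) · 2cos(c u)
  have key : ∀ u : ℝ,
      Complex.exp (2 * Real.pi * Complex.I * (a : ℂ) * (u : ℂ)) +
        Complex.exp (2 * Real.pi * Complex.I * (b : ℂ) * (u : ℂ)) =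
      Complex.exp ((d * u : ℝ) * Complex.I) * ((2 * Real.cos (c * u) : ℝ) : ℂ) := by
    intro u
    have h2c : ((2 * Real.cos (c * u) : ℝ) : ℂ) =
        Complex.exp ((c * u : ℝ) * Complex.I) + Complex.exp (-((c * u : ℝ) * Complex.I)) := by
      push_cast
      rw [Complex.two_cos, neg_mul]
    rw [h2c, mul_add, ← Complex.exp_add, ← Complex.exp_add]
    rw [hc, hd]
    push_cast
    ring_nf
  intro s hs t ht hst
  simp only [key] at hst
  obtain ⟨hs1, hs2⟩ := hs
  obtain ⟨ht1, ht2⟩ := ht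
  have hstb : |s - t| ≤ 2 / ((b : ℝ) ^ 2 - (a : ℝ) ^ 2) := by
    rw [abs_sub_le_iff]; constructor <;> linarith
  -- bound on phase differences
  have hcb : c * |s - t| < Real.pi := by
    have h1 : c * (2 / ((b : ℝ) ^ 2 - (a : ℝ) ^ 2)) = 2 * Real.pi / ((b : ℝ) + a) := by
      rw [hc, hsq]
      field_simp
    have h2 : 2 * Real.pi / ((b : ℝ) + a) < Real.pi := by
      rw [div_lt_iff₀ (by linarith)]
      nlinarith
    calc c * |s - t| ≤ c * (2 / ((b : ℝ) ^ 2 - (a : ℝ) ^ 2)) := by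
          exact mul_le_mul_of_nonneg_left hstb hcpos.le
      _ < Real.pi := by rw [h1]; exact h2
  have hdb : d * |s - t| < Real.pi := by
    have h1 : d * (2 / ((b : ℝ) ^ 2 - (a : ℝ) ^ 2)) = 2 * Real.pi / ((b : ℝ) - a) := by
      rw [hd, hsq]
      field_simp
    have h2 : 2 * Real.pi / ((b : ℝ) - a) < Real.pi := by
      rw [div_lt_iff₀ (by linarith)]
      nlinarith
    calc d * |s - t| ≤ d * (2 / ((b : ℝ) ^ 2 - (a : ℝ) ^ 2)) := by
          exact mul_le_mul_of_nonneg_left hstb hdpos.le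
      _ < Real.pi := by rw [h1]; exact h2
  -- moduli equal
  have habs : |2 * Real.cos (c * s)| = |2 * Real.cos (c * t)| := by
    have h := congrArg (‖·‖) hst
    rwa [norm_mul, norm_mul, Complex.norm_exp_ofReal_mul_I, Complex.norm_exp_ofReal_mul_I,
      one_mul, one_mul, Complex.norm_real, Complex.norm_real, Real.norm_eq_abs,
      Real.norm_eq_abs] at h
  have hsq2 : Real.cos (c * s) ^ 2 = Real.cos (c * t) ^ 2 := by
    have h1 : (2 * Real.cos (c * s)) ^ 2 = (2 * Real.cos (c * t)) ^ 2 := by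
      rw [← _root_.sq_abs (2 * Real.cos (c * s)), ← _root_.sq_abs (2 * Real.cos (c * t)), habs]
    linear_combination h1 / 4
  by_cases hzero : Real.cos (c * s) = 0
  · -- both cosines vanish
    have hzt : Real.cos (c * t) = 0 := by
      have : Real.cos (c * t) ^ 2 = 0 := by rw [← hsq2, hzero]; ring
      exact pow_eq_zero_iff (n := 2) (by norm_num) |>.1 this
    obtain ⟨k, hk⟩ := Real.cos_eq_zero_iff.1 hzero
    obtain ⟨m, hm⟩ := Real.cos_eq_zero_iff.1 hzt
    have hdiffeq : c * s - c * t = ((k : ℝ) - m) * Real.pi := by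
      rw [hk, hm]; push_cast; ring
    have habs2 : |((k : ℝ) - m)| * Real.pi < Real.pi := by
      have h5 : |c * s - c * t| = c * |s - t| := by
        rw [← mul_sub, abs_mul, abs_of_pos hcpos]
      have h6 : |c * s - c * t| = |((k : ℝ) - m)| * Real.pi := by
        rw [hdiffeq, abs_mul, abs_of_pos hpi]
      calc |((k : ℝ) - m)| * Real.pi = c * |s - t| := by rw [← h6, h5]
        _ < Real.pi := hcb
    have hkm : k = m := by
      by_contra hne
      have h1 : (1 : ℝ) ≤ |((k : ℝ) - m)| := by
        have : k - m ≠ 0 := sub_ne_zero.2 hne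
        have h2 : 1 ≤ |k - m| := Int.one_le_abs this
        calc (1:ℝ) ≤ (|k - m| : ℤ) := by exact_mod_cast h2
          _ = |((k : ℝ) - m)| := by rw [Int.cast_abs]; push_cast; ring_nf
      have h3 := mul_le_mul_of_nonneg_right h1 hpi.le
      rw [one_mul] at h3
      linarith
    have : c * s = c * t := by rw [hk, hm, hkm]
    exact mul_left_cancel₀ (ne_of_gt hcpos) this
  · -- both cosines nonzero
    set x := Real.cos (c * s) with hx
    set y := Real.cos (c * t) with hy
    have hzt : y ≠ 0 := by
      intro h
      apply hzero
      have : x ^ 2 = 0 := by rw [hsq2, h]; ring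
      exact pow_eq_zero_iff (n := 2) (by norm_num) |>.1 this
    have hsplit : Complex.exp ((d * s : ℝ) * Complex.I) =
        Complex.exp ((d * s - d * t : ℝ) * Complex.I) * Complex.exp ((d * t : ℝ) * Complex.I) := by
      rw [← Complex.exp_add]; push_cast; ring_nf
    rw [hsplit] at hst
    have hE : Complex.exp ((d * s - d * t : ℝ) * Complex.I) * ((2 * x : ℝ) : ℂ) =
        ((2 * y : ℝ) : ℂ) := by
      have hne := Complex.exp_ne_zero ((d * t : ℝ) * Complex.I)
      have h0 : Complex.exp ((d * t : ℝ) * Complex.I) *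
          (Complex.exp ((d * s - d * t : ℝ) * Complex.I) * ((2 * x : ℝ) : ℂ)) =
          Complex.exp ((d * t : ℝ) * Complex.I) * ((2 * y : ℝ) : ℂ) := by
        linear_combination hst
      exact mul_left_cancel₀ hne h0
    have hsq3 : Complex.exp ((d * s - d * t : ℝ) * Complex.I) ^ 2 = 1 := by
      have h1 := congrArg (· ^ 2) hE
      simp only [mul_pow] at h1
      have hc2 : ((x : ℝ) : ℂ) ^ 2 = ((y : ℝ) : ℂ) ^ 2 := by
        exact_mod_cast congrArg Complex.ofReal hsq2
      have h2 : ((2 * x : ℝ) : ℂ) ^ 2 = ((2 * y : ℝ) : ℂ) ^ 2 := by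
        push_cast
        linear_combination 4 * hc2
      rw [h2] at h1
      have h3 : ((2 * y : ℝ) : ℂ) ^ 2 ≠ 0 := by
        simp [hzt]
      exact mul_right_cancel₀ h3 (by rw [one_mul]; exact h1)
    have hexp1 : Complex.exp ((2 * (d * s - d * t) : ℝ) * Complex.I) = 1 := by
      rw [← hsq3, sq, ← Complex.exp_add]
      congr 1
      push_cast
      ring
    obtain ⟨n, hn⟩ := Complex.exp_eq_one_iff.1 hexp1
    have hI : ((2 * (d * s - d * t) : ℝ) : ℂ) = (n : ℂ) * (2 * (Real.pi : ℂ)) := by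
      apply mul_right_cancel₀ Complex.I_ne_zero
      linear_combination hn
    have hIr : 2 * (d * s - d * t) = (n : ℝ) * (2 * Real.pi) := by exact_mod_cast hI
    have hreal : d * s - d * t = (n : ℝ) * Real.pi := by linarith
    have hn0 : n = 0 := by
      by_contra hne
      have h1 : (1 : ℝ) ≤ |(n : ℝ)| := by
        have h2 : 1 ≤ |n| := Int.one_le_abs hne
        calc (1:ℝ) ≤ (|n| : ℤ) := by exact_mod_cast h2
          _ = |(n : ℝ)| := by rw [Int.cast_abs]
      have h3 : |d * s - d * t| = d * |s - t| := by
        rw [← mul_sub, abs_mul, abs_of_pos hdpos]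
      have h4 : |(n : ℝ) * Real.pi| = |(n : ℝ)| * Real.pi := by
        rw [abs_mul, abs_of_pos hpi]
      rw [hreal, h4] at h3
      have h5 := mul_le_mul_of_nonneg_right h1 hpi.le
      rw [one_mul] at h5
      linarith
    have : d * s = d * t := by
      have := hreal
      rw [hn0] at this
      push_cast at this
      linarith
    exact mul_left_cancel₀ (ne_of_gt hdpos) this
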